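/- Let s, s*, r, r*, q, q* be positive real numbers. Then 2 − s*/s + q/q* − r/r* − (r* · s · q)/(r · s* · q*) ≤ (−r/r* + ln(r/r*)) − (−q/q* + ln(q/q*)), with equality if and only if s = s* and r* · s · q = r · s* · q*. -/
import Mathlib

lemma phi_le_zero {a : ℝ} (ha : 0 < a) : 1 - a + Real.log a ≤ 0 := by
  have := Real.log_le_sub_one_of_pos ha; linarith

lemma phi_eq_zero_iff {a : ℝ} (ha : 0 < a) : 1 - a + Real.log a = 0 ↔ a = 1 := by
  constructor
  · intro h
    by_contra hne
    have := Real.log_lt_sub_one_of_pos ha hne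
    linarith
  · rintro rfl; simp

/-- The key estimate `F_ij ≤ G_i(ρ_i) − G_j(ρ_j)` in the proof of Theorem 3, with the
equality case: for positive reals,
`2 - s*/s + q/q* - r/r* - (r* s q)/(r s* q*) ≤ (-r/r* + ln(r/r*)) - (-q/q* + ln(q/q*))`,
with equality iff `s = s*` and `r* s q = r s* q*`. -/
theorem stmt_12 (s sstar r rstar q qstar : ℝ)
    (hs : 0 < s) (hsstar : 0 < sstar) (hr : 0 < r) (hrstar : 0 < rstar)
    (hq : 0 < q) (hqstar : 0 < qstar) :
    (2 - sstar / s + q / qstar - r / rstar - (rstar * s * q) / (r * sstar * qstar) ≤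
      (-(r / rstar) + Real.log (r / rstar)) - (-(q / qstar) + Real.log (q / qstar))) ∧
    (2 - sstar / s + q / qstar - r / rstar - (rstar * s * q) / (r * sstar * qstar) =
        (-(r / rstar) + Real.log (r / rstar)) - (-(q / qstar) + Real.log (q / qstar)) ↔
      s = sstar ∧ rstar * s * q = r * sstar * qstar) := by
  set a : ℝ := sstar / s with hadef
  set b : ℝ := (rstar * s * q) / (r * sstar * qstar) with hbdef
  have ha : 0 < a := div_pos hsstar hs
  have hb : 0 < b := div_pos (by positivity) (by positivity)
  have hlog : Real.log (r / rstar) - Real.log (q / qstar) = -(Real.log a + Real.log b) := by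
    rw [hadef, hbdef, Real.log_div hr.ne' hrstar.ne', Real.log_div hq.ne' hqstar.ne',
      Real.log_div hsstar.ne' hs.ne',
      Real.log_div (by positivity) (by positivity),
      Real.log_mul (by positivity) hq.ne', Real.log_mul hrstar.ne' hs.ne',
      Real.log_mul (by positivity) hqstar.ne', Real.log_mul hr.ne' hsstar.ne']
    ring
  have key : 2 - sstar / s + q / qstar - r / rstar - (rstar * s * q) / (r * sstar * qstar)
      - ((-(r / rstar) + Real.log (r / rstar)) - (-(q / qstar) + Real.log (q / qstar)))
      = (1 - a + Real.log a) + (1 - b + Real.log b) := by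
    rw [← hadef, ← hbdef]; linarith [hlog]
  have hpa := phi_le_zero ha
  have hpb := phi_le_zero hb
  constructor
  · linarith
  · constructor
    · intro h
      have hsum : (1 - a + Real.log a) + (1 - b + Real.log b) = 0 := by linarith
      have ha1 : a = 1 := (phi_eq_zero_iff ha).mp (by linarith)
      have hb1 : b = 1 := (phi_eq_zero_iff hb).mp (by linarith)
      constructor
      · exact ((div_eq_one_iff_eq hs.ne').mp ha1).symm
      · exact (div_eq_one_iff_eq (by positivity)).mp hb1
    · rintro ⟨h1, h2⟩
      have ha1 : a = 1 := by rw [hadef, h1, div_self hsstar.ne']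
      have hb1 : b = 1 := by rw [hbdef, h2, div_self (by positivity)]
      have := (phi_eq_zero_iff ha).mpr ha1
      have := (phi_eq_zero_iff hb).mpr hb1
      linarith
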